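/- For the ring Z[ε] = Z[T]/(T²) of dual integers, the modules (6Z ⊆ Z) ⊕ (Z ⊆ Z) and (2Z ⊆ Z) ⊕ (3Z ⊆ Z) — each viewed as a Z[ε]-module A ⊕ B with ε acting by the inclusion A → B as in (a,b) ↦ (0, u(a)) — are isomorphic as Z[ε]-modules, yet (6Z ⊆ Z) is isomorphic to neither (2Z ⊆ Z) nor (3Z ⊆ Z). Hence the Krull–Remak–Schmidt property fails for Gorenstein-projective Z[ε]-modules. -/

import Mathlib

/-- The differential on `ℤ × ℤ` corresponding to the `ℤ[ε]`-module given by the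
subgroup embedding `dℤ ⊆ ℤ` (with `dℤ ≅ ℤ` via multiplication by `d`):
`ε · (a, b) = (0, d * a)`. -/
def eps (d : ℤ) : (ℤ × ℤ) →ₗ[ℤ] (ℤ × ℤ) :=
  LinearMap.prod 0 (d • LinearMap.fst ℤ ℤ ℤ)

/-- The explicit isomorphism, given by the matrix `[[3,1],[2,1]]` on the `a`-components
and `[[1,2],[1,3]]` on the `b`-components (ambient copies of `ℤ`). -/
def phi : ((ℤ × ℤ) × (ℤ × ℤ)) ≃ₗ[ℤ] ((ℤ × ℤ) × (ℤ × ℤ)) where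
  toFun x := ((3 * x.1.1 + x.2.1, x.1.2 + 2 * x.2.2), (2 * x.1.1 + x.2.1, x.1.2 + 3 * x.2.2))
  invFun x := ((x.1.1 - x.2.1, 3 * x.1.2 - 2 * x.2.2), (-2 * x.1.1 + 3 * x.2.1, -x.1.2 + x.2.2))
  map_add' a b := by simp [Prod.ext_iff]; and_intros <;> ring
  map_smul' c a := by simp [Prod.ext_iff]; and_intros <;> ring
  left_inv x := by simp [Prod.ext_iff]; and_intros <;> ring
  right_inv x := by simp [Prod.ext_iff]; and_intros <;> ring

lemma noniso (k : ℤ) (hk : k = 2 ∨ k = 3)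
    (h : ∃ ψ : (ℤ × ℤ) ≃ₗ[ℤ] (ℤ × ℤ), ∀ x, ψ (eps 6 x) = eps k (ψ x)) : False := by
  obtain ⟨ψ, h⟩ := h
  have h1 := h (1, 0)
  have he : eps (6:ℤ) (1,0) = ((6:ℤ) • ((0:ℤ),(1:ℤ))) := by simp [eps]
  rw [he, map_smul] at h1
  set P := ψ (1, 0) with hP
  set Q := ψ (0, 1) with hQ
  have hq : 6 * Q.1 = 0 ∧ 6 * Q.2 = k * P.1 := by
    have := h1
    simp [eps, Prod.ext_iff] at this
    constructor
    · omega
    · linarith [this.2]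
  obtain ⟨v, hv⟩ := ψ.surjective (1, 0)
  have hv1 : ψ v = v.1 • P + v.2 • Q := by
    rw [hP, hQ, ← map_smul, ← map_smul, ← map_add]
    congr 1
    simp [Prod.ext_iff]
  rw [hv1] at hv
  have h2 : v.1 * P.1 + v.2 * Q.1 = 1 := by
    have := congrArg Prod.fst hv
    simpa using this
  have hq1 : Q.1 = 0 := by omega
  rw [hq1, mul_zero, add_zero] at h2
  have : IsUnit P.1 := IsUnit.of_mul_eq_one _ (by linarith [h2])
  rw [Int.isUnit_iff] at this
  rcases hk with rfl | rfl <;> rcases this with h3 | h3 <;> omega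

/-- The `ℤ[ε]`-modules `(6ℤ ⊆ ℤ) ⊕ (ℤ ⊆ ℤ)` and `(2ℤ ⊆ ℤ) ⊕ (3ℤ ⊆ ℤ)` are isomorphic
(an isomorphism of `ℤ[ε]`-modules being an additive (equivalently `ℤ`-linear) bijection
commuting with the `ε`-action), but `(6ℤ ⊆ ℤ)` is isomorphic to neither `(2ℤ ⊆ ℤ)` nor
`(3ℤ ⊆ ℤ)`.  Hence Krull–Remak–Schmidt fails for Gorenstein-projective `ℤ[ε]`-modules. -/
theorem stmt0 :
    (∃ φ : ((ℤ × ℤ) × (ℤ × ℤ)) ≃ₗ[ℤ] ((ℤ × ℤ) × (ℤ × ℤ)),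
      ∀ x, φ (((eps 6).prodMap (eps 1)) x) = ((eps 2).prodMap (eps 3)) (φ x)) ∧
    (¬ ∃ ψ : (ℤ × ℤ) ≃ₗ[ℤ] (ℤ × ℤ), ∀ x, ψ (eps 6 x) = eps 2 (ψ x)) ∧
    (¬ ∃ ψ : (ℤ × ℤ) ≃ₗ[ℤ] (ℤ × ℤ), ∀ x, ψ (eps 6 x) = eps 3 (ψ x)) := by
  refine ⟨⟨phi, ?_⟩, fun h => noniso 2 (Or.inl rfl) h, fun h => noniso 3 (Or.inr rfl) h⟩
  intro x
  simp [phi, eps, Prod.ext_iff]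
  and_intros <;> ring
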